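/- In a finite DAG, if B is a descendant of vertex Y and B lies as a non-collider on a path π from vertex K to Y with respect to conditioning set S, where S contains no descendants of Y and no descendants of K, and Y is not an ancestor of K, then on at least one side of B the path π must contain a collider that is a descendant of Y, and hence π is blocked by S. -/
import Mathlib


/-! Directed walks in a digraph `G : V → V → Prop` together with the notions needed for
d-separation: colliders, blocking, back-door paths. -/

variable {V : Type*}

/-- A walk in a directed graph that may traverse edges in either direction.
`fwd h w` prepends the edge `a ⟶ b` (traversed from `a` towards `b`),
`bwd h w` prepends the edge `b ⟶ a` (traversed from `a` towards `b` against its direction). -/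
inductive DWalk (G : V → V → Prop) : V → V → Type _
  | nil (a : V) : DWalk G a a
  | fwd {a b c : V} (h : G a b) (w : DWalk G b c) : DWalk G a c
  | bwd {a b c : V} (h : G b a) (w : DWalk G b c) : DWalk G a c

namespace DWalk

variable {G : V → V → Prop}

/-- Vertices visited by the walk, in order. -/
def support : {a c : V} → DWalk G a c → List V
  | a, _, nil _ => [a]
  | a, _, fwd _ w => a :: w.support
  | a, _, bwd _ w => a :: w.support

/-- A path is a walk with no repeated vertices. -/
def IsPath {a c : V} (w : DWalk G a c) : Prop := w.support.Nodup

/-- `Des G v x`: `x` is a (strict) descendant of `v`, i.e. reachable by a nonempty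
directed path. -/
def Des (G : V → V → Prop) (v x : V) : Prop := Relation.TransGen G v x

/-- The walk starts with an edge pointing into its first vertex (back-door). -/
def StartsInto : {a c : V} → DWalk G a c → Prop
  | _, _, nil _ => False
  | _, _, fwd _ _ => False
  | _, _, bwd _ _ => True

/-- The walk ends with an edge pointing into its last vertex. -/
def EndsInto : {a c : V} → DWalk G a c → Prop
  | _, _, nil _ => False
  | _, _, fwd _ (nil _) => True
  | _, _, bwd _ (nil _) => False
  | _, _, fwd _ (fwd h w) => EndsInto (fwd h w)
  | _, _, fwd _ (bwd h w) => EndsInto (bwd h w)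
  | _, _, bwd _ (fwd h w) => EndsInto (fwd h w)
  | _, _, bwd _ (bwd h w) => EndsInto (bwd h w)

/-- Concatenation of walks. -/
def append : {a b c : V} → DWalk G a b → DWalk G b c → DWalk G a c
  | _, _, _, nil _, w => w
  | _, _, _, fwd h w₁, w₂ => fwd h (append w₁ w₂)
  | _, _, _, bwd h w₁, w₂ => bwd h (append w₁ w₂)

/-- `b` occurs as a collider (`→ b ←`) at some interior position of the walk. -/
def IsColliderOn : {a c : V} → DWalk G a c → V → Prop
  | _, _, nil _, _ => False
  | _, _, fwd _ (nil _), _ => False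
  | _, _, bwd _ (nil _), _ => False
  | _, _, fwd (b := b) _ (fwd h w), x => IsColliderOn (fwd h w) x
  | _, _, fwd (b := b) _ (bwd h w), x => x = b ∨ IsColliderOn (bwd h w) x
  | _, _, bwd (b := b) _ (fwd h w), x => IsColliderOn (fwd h w) x
  | _, _, bwd (b := b) _ (bwd h w), x => IsColliderOn (bwd h w) x

/-- `b` occurs as a non-collider at some interior position of the walk. -/
def IsNonColliderOn : {a c : V} → DWalk G a c → V → Prop
  | _, _, nil _, _ => False
  | _, _, fwd _ (nil _), _ => False
  | _, _, bwd _ (nil _), _ => False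
  | _, _, fwd (b := b) _ (fwd h w), x => x = b ∨ IsNonColliderOn (fwd h w) x
  | _, _, fwd (b := b) _ (bwd h w), x => IsNonColliderOn (bwd h w) x
  | _, _, bwd (b := b) _ (fwd h w), x => x = b ∨ IsNonColliderOn (fwd h w) x
  | _, _, bwd (b := b) _ (bwd h w), x => x = b ∨ IsNonColliderOn (bwd h w) x

/-- The walk is blocked by the conditioning set `S` (d-separation blocking): some interior
non-collider lies in `S`, or some interior collider has neither itself nor any of its
descendants in `S`. -/
def Blocked (S : Set V) : {a c : V} → DWalk G a c → Prop
  | _, _, nil _ => False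
  | _, _, fwd _ (nil _) => False
  | _, _, bwd _ (nil _) => False
  | _, _, fwd (b := b) _ (fwd h w) => b ∈ S ∨ Blocked S (fwd h w)
  | _, _, fwd (b := b) _ (bwd h w) =>
      (b ∉ S ∧ ∀ x, Des G b x → x ∉ S) ∨ Blocked S (bwd h w)
  | _, _, bwd (b := b) _ (fwd h w) => b ∈ S ∨ Blocked S (fwd h w)
  | _, _, bwd (b := b) _ (bwd h w) => b ∈ S ∨ Blocked S (bwd h w)

end DWalk

/-- d-separation: every path between `a` and `c` is blocked by `S`. -/
def DSep (G : V → V → Prop) (S : Set V) (a c : V) : Prop :=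
  ∀ w : DWalk G a c, w.IsPath → w.Blocked S

/-- Acyclicity of a directed graph. -/
def Acyclic (G : V → V → Prop) : Prop := ∀ v : V, ¬ Relation.TransGen G v v

open DWalk

section Aux
variable {G : V → V → Prop} {Y B : V}

/-- Following a forward edge rightwards: either we hit a collider that is a descendant of
`Y`, or direction never flips and the final vertex is a descendant of `Y`. -/
lemma lemR {a b c : V} (h : G a b) (w : DWalk G b c) (hb : Des G Y b) :
    (∃ x, (DWalk.fwd h w).IsColliderOn x ∧ Des G Y x) ∨ Des G Y c := by
  match w with
  | .nil _ => exact Or.inr hb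
  | .fwd h' w' =>
      rcases lemR h' w' (hb.tail h') with ⟨x, hx, hdx⟩ | hc
      · exact Or.inl ⟨x, hx, hdx⟩
      · exact Or.inr hc
  | .bwd h' w' => exact Or.inl ⟨_, Or.inl rfl, hb⟩

/-- Main lemma: a non-collider occurrence of `B ∈ Des Y` on a walk yields a collider that
is a descendant of `Y`, unless a directed chain from `B` escapes through an endpoint. -/
lemma lemM (hB : Des G Y B) {a c : V} (w : DWalk G a c) (hnc : w.IsNonColliderOn B) :
    (∃ x, w.IsColliderOn x ∧ Des G Y x) ∨ (Des G Y a ∧ w.StartsInto) ∨ Des G Y c := by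
  match w with
  | .nil _ => exact absurd hnc id
  | .fwd _ (.nil _) => exact absurd hnc id
  | .bwd _ (.nil _) => exact absurd hnc id
  | .fwd h (.fwd h' w') =>
      rcases hnc with rfl | hnc
      · rcases lemR h' w' (hB.tail h') with ⟨x, hx, hdx⟩ | hc
        · exact Or.inl ⟨x, hx, hdx⟩
        · exact Or.inr (Or.inr hc)
      · rcases lemM hB (.fwd h' w') hnc with ⟨x, hx, hdx⟩ | ⟨hda, hsi⟩ | hc
        · exact Or.inl ⟨x, hx, hdx⟩
        · exact absurd hsi id
        · exact Or.inr (Or.inr hc)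
  | .fwd h (.bwd h' w') =>
      rcases lemM hB (.bwd h' w') hnc with ⟨x, hx, hdx⟩ | ⟨hda, hsi⟩ | hc
      · exact Or.inl ⟨x, Or.inr hx, hdx⟩
      · exact Or.inl ⟨_, Or.inl rfl, hda⟩
      · exact Or.inr (Or.inr hc)
  | .bwd h (.fwd h' w') =>
      rcases hnc with rfl | hnc
      · rcases lemR h' w' (hB.tail h') with ⟨x, hx, hdx⟩ | hc
        · exact Or.inl ⟨x, hx, hdx⟩
        · exact Or.inr (Or.inr hc)
      · rcases lemM hB (.fwd h' w') hnc with ⟨x, hx, hdx⟩ | ⟨hda, hsi⟩ | hc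
        · exact Or.inl ⟨x, hx, hdx⟩
        · exact absurd hsi id
        · exact Or.inr (Or.inr hc)
  | .bwd h (.bwd h' w') =>
      rcases hnc with rfl | hnc
      · exact Or.inr (Or.inl ⟨hB.tail h, trivial⟩)
      · rcases lemM hB (.bwd h' w') hnc with ⟨x, hx, hdx⟩ | ⟨hda, hsi⟩ | hc
        · exact Or.inl ⟨x, hx, hdx⟩
        · exact Or.inr (Or.inl ⟨hda.tail h, trivial⟩)
        · exact Or.inr (Or.inr hc)

/-- A collider with neither itself nor any descendant in `S` blocks the walk. -/
lemma lemBl {S : Set V} {a c : V} (w : DWalk G a c) (x : V) (hcol : w.IsColliderOn x)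
    (hxS : x ∉ S) (hdS : ∀ d, Des G x d → d ∉ S) : w.Blocked S := by
  match w with
  | .nil _ => exact absurd hcol id
  | .fwd _ (.nil _) => exact absurd hcol id
  | .bwd _ (.nil _) => exact absurd hcol id
  | .fwd h (.fwd h' w') => exact Or.inr (lemBl (.fwd h' w') x hcol hxS hdS)
  | .fwd h (.bwd h' w') =>
      rcases hcol with rfl | hcol
      · exact Or.inl ⟨hxS, hdS⟩
      · exact Or.inr (lemBl (.bwd h' w') x hcol hxS hdS)
  | .bwd h (.fwd h' w') => exact Or.inr (lemBl (.fwd h' w') x hcol hxS hdS)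
  | .bwd h (.bwd h' w') => exact Or.inr (lemBl (.bwd h' w') x hcol hxS hdS)

end Aux

/-- If `B` is a descendant of `Y` lying as a non-collider on a path `π` from `K` to `Y`,
where `S` contains no descendants of `Y` and no descendants of `K`, the DAG is acyclic and
`Y` is not an ancestor of `K`, then `π` contains a collider that is a descendant of `Y`,
and hence `π` is blocked by `S`. -/
theorem stmt5 {V : Type*} (G : V → V → Prop) (hacyc : Acyclic G)
    (K Y B : V)
    (S : Set V)
    (hSdesY : ∀ v, Des G Y v → v ∉ S) (hSdesK : ∀ v, Des G K v → v ∉ S)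
    (hYnotAncK : ¬ Des G Y K)
    (π : DWalk G K Y) (hpath : π.IsPath)
    (hBdes : Des G Y B)
    (hBnoncol : π.IsNonColliderOn B) :
    (∃ x, π.IsColliderOn x ∧ Des G Y x) ∧ π.Blocked S := by
  rcases lemM hBdes π hBnoncol with ⟨x, hx, hdx⟩ | ⟨hdK, _⟩ | hY
  · refine ⟨⟨x, hx, hdx⟩, lemBl π x hx (hSdesY x hdx) ?_⟩
    intro d hd
    exact hSdesY d (hdx.trans hd)
  · exact absurd hdK hYnotAncK
  · exact absurd hY (hacyc Y)
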